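/- Let f(x) = arctan(eˣ). Then for all real x, f'(x) = eˣ/(1 + e^{2x}), and f' is positive everywhere; moreover for distinct positive reals δ_1, δ_2, δ_3, setting σ_i = e^{δ_i}, the Wronskian W(Δ_{δ_1}f', Δ_{δ_2}f', Δ_{δ_3}f') does not vanish identically, so the functions Δ_{δ_1}f', Δ_{δ_2}f', Δ_{δ_3}f' are linearly independent. -/

import Mathlib

/-- `f(x) = arctan (eˣ)`. -/
noncomputable def fArctanExp : ℝ → ℝ := fun x => Real.arctan (Real.exp x)

/-- The discrete derivative `Δ_δ f'` of `f' = (arctan ∘ exp)'`. -/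
noncomputable def gD (δ : ℝ) : ℝ → ℝ := fun x =>
  deriv fArctanExp (x + δ) - deriv fArctanExp x

/-! ### Auxiliary machinery -/

noncomputable def cF : ℝ → ℝ := fun x => Real.exp x / (1 + Real.exp x ^ 2)
noncomputable def cF1 : ℝ → ℝ := fun x => Real.exp x * (1 - Real.exp x ^ 2) / (1 + Real.exp x ^ 2) ^ 2
noncomputable def cF2 : ℝ → ℝ := fun x => Real.exp x * (1 - 6 * Real.exp x ^ 2 + Real.exp x ^ 4) / (1 + Real.exp x ^ 2) ^ 3

open Filter

lemma hasDerivAt_cF (x : ℝ) : HasDerivAt cF (cF1 x) x := by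
  have h1 : HasDerivAt (fun x : ℝ => Real.exp x) (Real.exp x) x := Real.hasDerivAt_exp x
  have h2 : HasDerivAt (fun x : ℝ => 1 + Real.exp x ^ 2) (2 * Real.exp x * Real.exp x) x := by
    simpa using (hasDerivAt_const x (1:ℝ)).fun_add (h1.fun_pow 2)
  have := h1.div h2 (by positivity)
  refine this.congr_deriv ?_
  unfold cF1
  field_simp
  ring

lemma hasDerivAt_cF1 (x : ℝ) : HasDerivAt cF1 (cF2 x) x := by
  have h1 : HasDerivAt (fun x : ℝ => Real.exp x) (Real.exp x) x := Real.hasDerivAt_exp x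
  have hn : HasDerivAt (fun x : ℝ => Real.exp x * (1 - Real.exp x ^ 2))
      (Real.exp x * (1 - Real.exp x ^ 2) + Real.exp x * (-(2 * Real.exp x * Real.exp x))) x := by
    exact h1.mul (by simpa using ((hasDerivAt_const x (1:ℝ)).fun_sub (h1.fun_pow 2)))
  have hd : HasDerivAt (fun x : ℝ => (1 + Real.exp x ^ 2) ^ 2)
      ((2 : ℕ) * (1 + Real.exp x ^ 2) ^ 1 * (2 * Real.exp x * Real.exp x)) x := by
    exact (by simpa using ((hasDerivAt_const x (1:ℝ)).fun_add (h1.fun_pow 2)) :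
      HasDerivAt (fun x : ℝ => 1 + Real.exp x ^ 2) (2 * Real.exp x * Real.exp x) x).pow 2
  have := hn.div hd (by positivity)
  refine this.congr_deriv ?_
  unfold cF2
  field_simp
  ring

lemma hasDerivAt_fArctanExp (x : ℝ) : HasDerivAt fArctanExp (cF x) x := by
  have h1 : HasDerivAt (fun x : ℝ => Real.exp x) (Real.exp x) x := Real.hasDerivAt_exp x
  have h2 := (Real.hasDerivAt_arctan (Real.exp x)).comp x h1
  refine h2.congr_deriv ?_
  unfold cF
  field_simp

lemma deriv_f (x : ℝ) : deriv fArctanExp x = cF x := (hasDerivAt_fArctanExp x).deriv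

lemma gD_eq (δ : ℝ) : gD δ = fun x => cF (x + δ) - cF x := by
  funext x; simp [gD, deriv_f]

lemma hasDerivAt_shift (F F' : ℝ → ℝ) (h : ∀ x, HasDerivAt F (F' x) x) (δ x : ℝ) :
    HasDerivAt (fun x => F (x + δ) - F x) (F' (x + δ) - F' x) x := by
  have h1 : HasDerivAt (fun x : ℝ => F (x + δ)) (F' (x + δ)) x := by
    have := (h (x + δ)).comp x ((hasDerivAt_id x).add_const δ)
    exact this.congr_deriv (mul_one _)
  exact h1.sub (h x)

lemma deriv_gD (δ x : ℝ) : deriv (gD δ) x = cF1 (x + δ) - cF1 x := by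
  rw [gD_eq]
  exact (hasDerivAt_shift cF cF1 hasDerivAt_cF δ x).deriv

lemma deriv_deriv_gD (δ x : ℝ) : deriv (deriv (gD δ)) x = cF2 (x + δ) - cF2 x := by
  have h : deriv (gD δ) = fun x => cF1 (x + δ) - cF1 x := funext (deriv_gD δ)
  rw [h]
  exact (hasDerivAt_shift cF1 cF2 hasDerivAt_cF1 δ x).deriv

lemma tendsto_base : Tendsto (fun x : ℝ => Real.exp (-(2 * x)) + 1) atTop (nhds 1) := by
  have h : Tendsto (fun x : ℝ => -(2 * x)) atTop atBot := by
    apply Filter.tendsto_atBot_mono (fun x => le_refl _)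
    exact (tendsto_neg_atBot_iff.mpr (tendsto_id.const_mul_atTop two_pos))
  simpa using (Real.tendsto_exp_atBot.comp h).add tendsto_const_nhds

lemma limA : Tendsto (fun x : ℝ => Real.exp x * cF x) atTop (nhds 1) := by
  have heq : ∀ x : ℝ, Real.exp x * cF x = (Real.exp (-(2 * x)) + 1)⁻¹ := by
    intro x
    unfold cF
    rw [show -(2 * x) = -x + -x by ring, Real.exp_add, Real.exp_neg]
    have := Real.exp_ne_zero x
    have := (by positivity : (0:ℝ) < 1 + Real.exp x ^ 2)
    field_simp
  simp only [heq]
  simpa using tendsto_base.inv₀ one_ne_zero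

lemma limB : Tendsto (fun x : ℝ => Real.exp (3 * x) * (cF x + cF1 x)) atTop (nhds 2) := by
  have heq : ∀ x : ℝ, Real.exp (3 * x) * (cF x + cF1 x) = 2 * ((Real.exp (-(2 * x)) + 1)⁻¹) ^ 2 := by
    intro x
    unfold cF cF1
    rw [show -(2 * x) = -x + -x by ring, show (3:ℝ) * x = x + (x + x) by ring,
      Real.exp_add]
    simp only [Real.exp_add, Real.exp_neg]
    have := Real.exp_ne_zero x
    have := (by positivity : (0:ℝ) < 1 + Real.exp x ^ 2)
    field_simp
    ring
  simp only [heq]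
  have := (tendsto_base.inv₀ one_ne_zero).pow 2
  simpa using tendsto_const_nhds.mul this

lemma limC : Tendsto (fun x : ℝ => Real.exp (5 * x) * (cF2 x + 4 * cF1 x + 3 * cF x)) atTop (nhds 8) := by
  have heq : ∀ x : ℝ, Real.exp (5 * x) * (cF2 x + 4 * cF1 x + 3 * cF x)
      = 8 * ((Real.exp (-(2 * x)) + 1)⁻¹) ^ 3 := by
    intro x
    unfold cF cF1 cF2
    rw [show -(2 * x) = -x + -x by ring, show (5:ℝ) * x = x + (x + (x + (x + x))) by ring,
      Real.exp_add]
    simp only [Real.exp_add, Real.exp_neg]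
    have := Real.exp_ne_zero x
    have := (by positivity : (0:ℝ) < 1 + Real.exp x ^ 2)
    field_simp
    ring
  simp only [heq]
  have := (tendsto_base.inv₀ one_ne_zero).pow 3
  simpa using tendsto_const_nhds.mul this

lemma lim_shift (k L δ : ℝ) (G : ℝ → ℝ)
    (h : Tendsto (fun x : ℝ => Real.exp (k * x) * G x) atTop (nhds L)) :
    Tendsto (fun x : ℝ => Real.exp (k * x) * (G (x + δ) - G x)) atTop
      (nhds (Real.exp (-(k * δ)) * L - L)) := by
  have hcomp : Tendsto (fun x : ℝ => Real.exp (k * (x + δ)) * G (x + δ)) atTop (nhds L) :=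
    h.comp (tendsto_atTop_add_const_right atTop δ tendsto_id)
  have h2 : Tendsto (fun x : ℝ => Real.exp (-(k * δ)) * (Real.exp (k * (x + δ)) * G (x + δ))
      - Real.exp (k * x) * G x) atTop (nhds (Real.exp (-(k * δ)) * L - L)) :=
    (hcomp.const_mul _).sub h
  convert h2 using 2 with x
  rw [← mul_assoc, ← Real.exp_add]
  ring_nf

lemma det_scale (x a1 a2 a3 b1 b2 b3 d1 d2 d3 : ℝ) :
    Real.exp (9 * x) * Matrix.det !![a1, a2, a3; b1, b2, b3; d1, d2, d3] =
      Matrix.det !![Real.exp x * a1, Real.exp x * a2, Real.exp x * a3;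
        Real.exp (3 * x) * (a1 + b1), Real.exp (3 * x) * (a2 + b2), Real.exp (3 * x) * (a3 + b3);
        Real.exp (5 * x) * (d1 + 4 * b1 + 3 * a1), Real.exp (5 * x) * (d2 + 4 * b2 + 3 * a2),
          Real.exp (5 * x) * (d3 + 4 * b3 + 3 * a3)] := by
  have h9 : Real.exp (9 * x) = Real.exp x * Real.exp (3 * x) * Real.exp (5 * x) := by
    rw [← Real.exp_add, ← Real.exp_add]; ring_nf
  simp [Matrix.det_fin_three]
  rw [h9]; ring

lemma key_ne (t1 t2 t3 : ℝ) (h1 : 0 < t1) (h2 : 0 < t2) (h3 : 0 < t3)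
    (h1' : t1 < 1) (h2' : t2 < 1) (h3' : t3 < 1)
    (h12 : t1 ≠ t2) (h13 : t1 ≠ t3) (h23 : t2 ≠ t3) :
    Matrix.det !![t1 - 1, t2 - 1, t3 - 1;
      2 * (t1 ^ 3 - 1), 2 * (t2 ^ 3 - 1), 2 * (t3 ^ 3 - 1);
      8 * (t1 ^ 5 - 1), 8 * (t2 ^ 5 - 1), 8 * (t3 ^ 5 - 1)] ≠ 0 := by
  have hfac : Matrix.det !![t1 - 1, t2 - 1, t3 - 1;
      2 * (t1 ^ 3 - 1), 2 * (t2 ^ 3 - 1), 2 * (t3 ^ 3 - 1);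
      8 * (t1 ^ 5 - 1), 8 * (t2 ^ 5 - 1), 8 * (t3 ^ 5 - 1)]
      = 16 * (t1 - 1) * (t2 - 1) * (t3 - 1) * (t2 - t1) * (t3 - t1) * (t3 - t2) *
        (t3 + t3 ^ 2 + t2 + 2 * t2 * t3 + t2 * t3 ^ 2 + t2 ^ 2 + t2 ^ 2 * t3 + t1 +
          2 * t1 * t3 + t1 * t3 ^ 2 + 2 * t1 * t2 + 2 * t1 * t2 * t3 + t1 * t2 ^ 2 +
          t1 ^ 2 + t1 ^ 2 * t3 + t1 ^ 2 * t2) := by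
    simp [Matrix.det_fin_three]
    ring
  rw [hfac]
  have hS : 0 < t3 + t3 ^ 2 + t2 + 2 * t2 * t3 + t2 * t3 ^ 2 + t2 ^ 2 + t2 ^ 2 * t3 + t1 +
      2 * t1 * t3 + t1 * t3 ^ 2 + 2 * t1 * t2 + 2 * t1 * t2 * t3 + t1 * t2 ^ 2 +
      t1 ^ 2 + t1 ^ 2 * t3 + t1 ^ 2 * t2 := by positivity
  have e1 : t1 - 1 ≠ 0 := by intro h; nlinarith
  have e2 : t2 - 1 ≠ 0 := by intro h; nlinarith
  have e3 : t3 - 1 ≠ 0 := by intro h; nlinarith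
  have e4 : t2 - t1 ≠ 0 := fun h => h12 (by linarith [sub_eq_zero.mp h])
  have e5 : t3 - t1 ≠ 0 := fun h => h13 (by linarith [sub_eq_zero.mp h])
  have e6 : t3 - t2 ≠ 0 := fun h => h23 (by linarith [sub_eq_zero.mp h])
  positivity

lemma exp_neg_cube (δ : ℝ) : Real.exp (-(3 * δ)) = Real.exp (-δ) ^ 3 := by
  rw [show -(3 * δ) = ((3:ℕ) : ℝ) * (-δ) by push_cast; ring, Real.exp_nat_mul]

lemma exp_neg_pow5 (δ : ℝ) : Real.exp (-(5 * δ)) = Real.exp (-δ) ^ 5 := by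
  rw [show -(5 * δ) = ((5:ℕ) : ℝ) * (-δ) by push_cast; ring, Real.exp_nat_mul]

/-- Limit of the first scaled row entry. -/
lemma limE1 (δ : ℝ) : Tendsto (fun x : ℝ => Real.exp x * gD δ x) atTop
    (nhds (Real.exp (-δ) - 1)) := by
  rw [gD_eq]
  have := lim_shift 1 1 δ cF (by simpa using limA)
  simpa using this

/-- Limit of the second scaled row entry. -/
lemma limE2 (δ : ℝ) : Tendsto (fun x : ℝ => Real.exp (3 * x) * (gD δ x + deriv (gD δ) x)) atTop
    (nhds (2 * (Real.exp (-δ) ^ 3 - 1))) := by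
  have hG : ∀ x : ℝ, gD δ x + deriv (gD δ) x
      = (cF (x + δ) + cF1 (x + δ)) - (cF x + cF1 x) := by
    intro x
    have h0 : gD δ x = cF (x + δ) - cF x := by rw [gD_eq]
    rw [deriv_gD, h0]
    ring
  simp only [hG]
  have hlim := lim_shift 3 2 δ (fun y => cF y + cF1 y) limB
  have h2 : Tendsto (fun x : ℝ => Real.exp (3 * x) * ((cF (x + δ) + cF1 (x + δ)) - (cF x + cF1 x)))
      atTop (nhds (Real.exp (-(3 * δ)) * 2 - 2)) := by simpa using hlim
  rw [show Real.exp (-(3 * δ)) * 2 - 2 = 2 * (Real.exp (-δ) ^ 3 - 1) by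
    rw [exp_neg_cube]; ring] at h2
  exact h2

/-- Limit of the third scaled row entry. -/
lemma limE3 (δ : ℝ) : Tendsto (fun x : ℝ =>
    Real.exp (5 * x) * (deriv (deriv (gD δ)) x + 4 * deriv (gD δ) x + 3 * gD δ x)) atTop
    (nhds (8 * (Real.exp (-δ) ^ 5 - 1))) := by
  have hG : ∀ x : ℝ, deriv (deriv (gD δ)) x + 4 * deriv (gD δ) x + 3 * gD δ x
      = (cF2 (x + δ) + 4 * cF1 (x + δ) + 3 * cF (x + δ))
        - (cF2 x + 4 * cF1 x + 3 * cF x) := by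
    intro x
    have h0 : gD δ x = cF (x + δ) - cF x := by rw [gD_eq]
    rw [deriv_deriv_gD, deriv_gD, h0]
    ring
  simp only [hG]
  have hlim := lim_shift 5 8 δ (fun y => cF2 y + 4 * cF1 y + 3 * cF y) limC
  have h2 : Tendsto (fun x : ℝ => Real.exp (5 * x) * ((cF2 (x + δ) + 4 * cF1 (x + δ) + 3 * cF (x + δ))
      - (cF2 x + 4 * cF1 x + 3 * cF x))) atTop (nhds (Real.exp (-(5 * δ)) * 8 - 8)) := by
    simpa using hlim
  rw [show Real.exp (-(5 * δ)) * 8 - 8 = 8 * (Real.exp (-δ) ^ 5 - 1) by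
    rw [exp_neg_pow5]; ring] at h2
  exact h2

/-- For `f(x) = arctan(eˣ)`: `f'(x) = eˣ/(1 + e^{2x}) > 0`, and for distinct
positive `δ₁, δ₂, δ₃` the Wronskian of `Δ_{δ₁} f', Δ_{δ₂} f', Δ_{δ₃} f'` does
not vanish identically, so these three functions are linearly independent. -/
theorem stmt_17 :
    (∀ x : ℝ, deriv fArctanExp x = Real.exp x / (1 + Real.exp (2 * x)) ∧
      0 < deriv fArctanExp x) ∧
    ∀ δ₁ δ₂ δ₃ : ℝ, 0 < δ₁ → 0 < δ₂ → 0 < δ₃ →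
      δ₁ ≠ δ₂ → δ₁ ≠ δ₃ → δ₂ ≠ δ₃ →
      (∃ x : ℝ,
        (Matrix.det !![gD δ₁ x, gD δ₂ x, gD δ₃ x;
          deriv (gD δ₁) x, deriv (gD δ₂) x, deriv (gD δ₃) x;
          deriv (deriv (gD δ₁)) x, deriv (deriv (gD δ₂)) x,
            deriv (deriv (gD δ₃)) x]) ≠ 0) ∧
      ∀ a b c : ℝ, (∀ x : ℝ, a * gD δ₁ x + b * gD δ₂ x + c * gD δ₃ x = 0) →
        a = 0 ∧ b = 0 ∧ c = 0 := by
  constructor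
  · intro x
    have hval : deriv fArctanExp x = Real.exp x / (1 + Real.exp (2 * x)) := by
      rw [deriv_f]
      unfold cF
      rw [show (2:ℝ) * x = x + x by ring, Real.exp_add, ← sq]
    refine ⟨hval, ?_⟩
    rw [hval]
    positivity
  · intro δ₁ δ₂ δ₃ hδ₁ hδ₂ hδ₃ h12 h13 h23
    set t1 := Real.exp (-δ₁) with ht1
    set t2 := Real.exp (-δ₂) with ht2
    set t3 := Real.exp (-δ₃) with ht3
    have ht1p : 0 < t1 := Real.exp_pos _
    have ht2p : 0 < t2 := Real.exp_pos _
    have ht3p : 0 < t3 := Real.exp_pos _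
    have ht1lt : t1 < 1 := by rw [ht1]; exact Real.exp_lt_one_iff.mpr (by linarith)
    have ht2lt : t2 < 1 := by rw [ht2]; exact Real.exp_lt_one_iff.mpr (by linarith)
    have ht3lt : t3 < 1 := by rw [ht3]; exact Real.exp_lt_one_iff.mpr (by linarith)
    have htne12 : t1 ≠ t2 := fun h => h12 (by
      have := Real.exp_injective h; linarith)
    have htne13 : t1 ≠ t3 := fun h => h13 (by
      have := Real.exp_injective h; linarith)
    have htne23 : t2 ≠ t3 := fun h => h23 (by
      have := Real.exp_injective h; linarith)
    -- the limit matrix and its determinant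
    set Mlim : Matrix (Fin 3) (Fin 3) ℝ := !![t1 - 1, t2 - 1, t3 - 1;
      2 * (t1 ^ 3 - 1), 2 * (t2 ^ 3 - 1), 2 * (t3 ^ 3 - 1);
      8 * (t1 ^ 5 - 1), 8 * (t2 ^ 5 - 1), 8 * (t3 ^ 5 - 1)] with hMlim
    have hLne : Mlim.det ≠ 0 :=
      key_ne t1 t2 t3 ht1p ht2p ht3p ht1lt ht2lt ht3lt htne12 htne13 htne23
    -- the scaled Wronskian matrix
    set Msc : ℝ → Matrix (Fin 3) (Fin 3) ℝ := fun x =>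
      !![Real.exp x * gD δ₁ x, Real.exp x * gD δ₂ x, Real.exp x * gD δ₃ x;
        Real.exp (3 * x) * (gD δ₁ x + deriv (gD δ₁) x),
          Real.exp (3 * x) * (gD δ₂ x + deriv (gD δ₂) x),
          Real.exp (3 * x) * (gD δ₃ x + deriv (gD δ₃) x);
        Real.exp (5 * x) * (deriv (deriv (gD δ₁)) x + 4 * deriv (gD δ₁) x + 3 * gD δ₁ x),
          Real.exp (5 * x) * (deriv (deriv (gD δ₂)) x + 4 * deriv (gD δ₂) x + 3 * gD δ₂ x),
          Real.exp (5 * x) * (deriv (deriv (gD δ₃)) x + 4 * deriv (gD δ₃) x + 3 * gD δ₃ x)]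
      with hMsc
    have hscale : ∀ x : ℝ, Real.exp (9 * x) *
        Matrix.det !![gD δ₁ x, gD δ₂ x, gD δ₃ x;
          deriv (gD δ₁) x, deriv (gD δ₂) x, deriv (gD δ₃) x;
          deriv (deriv (gD δ₁)) x, deriv (deriv (gD δ₂)) x, deriv (deriv (gD δ₃)) x]
        = (Msc x).det := by
      intro x
      exact det_scale x _ _ _ _ _ _ _ _ _
    have hMtend : Tendsto Msc atTop (nhds Mlim) := by
      refine tendsto_pi_nhds.mpr ?_
      intro i
      rw [tendsto_pi_nhds]
      intro j
      fin_cases i <;> fin_cases j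
      · exact limE1 δ₁
      · exact limE1 δ₂
      · exact limE1 δ₃
      · exact limE2 δ₁
      · exact limE2 δ₂
      · exact limE2 δ₃
      · exact limE3 δ₁
      · exact limE3 δ₂
      · exact limE3 δ₃
    have hdet_tend : Tendsto (fun x => (Msc x).det) atTop (nhds Mlim.det) :=
      ((continuous_id.matrix_det).tendsto Mlim).comp hMtend
    have hWtend : Tendsto (fun x => Real.exp (9 * x) *
        Matrix.det !![gD δ₁ x, gD δ₂ x, gD δ₃ x;
          deriv (gD δ₁) x, deriv (gD δ₂) x, deriv (gD δ₃) x;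
          deriv (deriv (gD δ₁)) x, deriv (deriv (gD δ₂)) x, deriv (deriv (gD δ₃)) x]) atTop
        (nhds Mlim.det) := by
      simp only [hscale]
      exact hdet_tend
    have hev := (hWtend.eventually_ne hLne).exists
    obtain ⟨x₀, hx₀⟩ := hev
    have hWx₀ : Matrix.det !![gD δ₁ x₀, gD δ₂ x₀, gD δ₃ x₀;
        deriv (gD δ₁) x₀, deriv (gD δ₂) x₀, deriv (gD δ₃) x₀;
        deriv (deriv (gD δ₁)) x₀, deriv (deriv (gD δ₂)) x₀, deriv (deriv (gD δ₃)) x₀] ≠ 0 :=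
      right_ne_zero_of_mul hx₀
    refine ⟨⟨x₀, hWx₀⟩, ?_⟩
    intro a b c hrel
    -- first derivative of the relation
    have hrel1 : ∀ x : ℝ, a * deriv (gD δ₁) x + b * deriv (gD δ₂) x + c * deriv (gD δ₃) x = 0 := by
      intro x
      have hF : HasDerivAt (fun y => a * (cF (y + δ₁) - cF y) + b * (cF (y + δ₂) - cF y)
            + c * (cF (y + δ₃) - cF y))
          (a * (cF1 (x + δ₁) - cF1 x) + b * (cF1 (x + δ₂) - cF1 x)
            + c * (cF1 (x + δ₃) - cF1 x)) x :=
        (((hasDerivAt_shift cF cF1 hasDerivAt_cF δ₁ x).const_mul a).add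
          ((hasDerivAt_shift cF cF1 hasDerivAt_cF δ₂ x).const_mul b)).add
          ((hasDerivAt_shift cF cF1 hasDerivAt_cF δ₃ x).const_mul c)
      have hzero : (fun y => a * (cF (y + δ₁) - cF y) + b * (cF (y + δ₂) - cF y)
          + c * (cF (y + δ₃) - cF y)) = fun _ => (0:ℝ) := by
        funext y
        have h := hrel y
        simp only [gD_eq] at h
        exact h
      rw [hzero] at hF
      have h0 := hF.unique (hasDerivAt_const x 0)
      rw [deriv_gD, deriv_gD, deriv_gD]
      exact h0
    have hrel2 : ∀ x : ℝ, a * deriv (deriv (gD δ₁)) x + b * deriv (deriv (gD δ₂)) x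
        + c * deriv (deriv (gD δ₃)) x = 0 := by
      intro x
      have hF : HasDerivAt (fun y => a * (cF1 (y + δ₁) - cF1 y) + b * (cF1 (y + δ₂) - cF1 y)
            + c * (cF1 (y + δ₃) - cF1 y))
          (a * (cF2 (x + δ₁) - cF2 x) + b * (cF2 (x + δ₂) - cF2 x)
            + c * (cF2 (x + δ₃) - cF2 x)) x :=
        (((hasDerivAt_shift cF1 cF2 hasDerivAt_cF1 δ₁ x).const_mul a).add
          ((hasDerivAt_shift cF1 cF2 hasDerivAt_cF1 δ₂ x).const_mul b)).add
          ((hasDerivAt_shift cF1 cF2 hasDerivAt_cF1 δ₃ x).const_mul c)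
      have hzero : (fun y => a * (cF1 (y + δ₁) - cF1 y) + b * (cF1 (y + δ₂) - cF1 y)
          + c * (cF1 (y + δ₃) - cF1 y)) = fun _ => (0:ℝ) := by
        funext y
        have h := hrel1 y
        simp only [deriv_gD] at h
        exact h
      rw [hzero] at hF
      have h0 := hF.unique (hasDerivAt_const x 0)
      rw [deriv_deriv_gD, deriv_deriv_gD, deriv_deriv_gD]
      exact h0
    -- assemble the kernel vector
    have hmv : (!![gD δ₁ x₀, gD δ₂ x₀, gD δ₃ x₀;
        deriv (gD δ₁) x₀, deriv (gD δ₂) x₀, deriv (gD δ₃) x₀;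
        deriv (deriv (gD δ₁)) x₀, deriv (deriv (gD δ₂)) x₀,
          deriv (deriv (gD δ₃)) x₀]).mulVec ![a, b, c] = 0 := by
      funext i
      fin_cases i <;>
        simp [Matrix.mulVec, dotProduct, Fin.sum_univ_three] <;>
        [have := hrel x₀; have := hrel1 x₀; have := hrel2 x₀] <;> linarith
    have hv := Matrix.eq_zero_of_mulVec_eq_zero hWx₀ hmv
    refine ⟨?_, ?_, ?_⟩
    · have := congr_fun hv 0; simpa using this
    · have := congr_fun hv 1; simpa using this
    · have := congr_fun hv 2; simpa using this
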